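/- Let a1, a2, b1, b2 be nonzero integers with a1 ≠ ± a2, gcd(a1,a2) = 1, gcd(b1,b2) = 1, and suppose a1/a2 and b1/b2 are multiplicatively independent in Q*. Then the set of primes dividing some term of the sequence x_n = b2 * a1^n - b1 * a2^n (n ≥ 0) is infinite. -/

import Mathlib

lemma int_prime_coprime {p : ℕ} (hp : p.Prime) {z : ℤ} (h : ¬(p:ℤ) ∣ z) : IsCoprime (p:ℤ) z := by
  rw [Int.isCoprime_iff_gcd_eq_one]
  have hnd : ¬ p ∣ z.natAbs := by
    rwa [← Int.natAbs_dvd_natAbs, Int.natAbs_natCast] at h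
  have := (Nat.Prime.coprime_iff_not_dvd hp).2 hnd
  simpa [Int.gcd] using this

lemma dvd_of_coprime_mul {z c1 c2 E : ℤ} (hcop : IsCoprime c1 c2)
    (h1 : z ∣ c1 * E) (h2 : z ∣ c2 * E) : z ∣ E := by
  obtain ⟨u, v, huv⟩ := hcop
  have hE : E = u * (c1 * E) + v * (c2 * E) := by linear_combination E * huv.symm
  rw [hE]; exact dvd_add (h1.mul_left u) (h2.mul_left v)

lemma exists_big (c k M : ℕ) : ∃ N, M ≤ N ∧ c * N ^ k < 2 ^ N := by
  have h := tendsto_pow_const_div_const_pow_of_one_lt k (by norm_num : (1:ℝ) < 2)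
  have h2 : ∀ᶠ n : ℕ in Filter.atTop, (n:ℝ) ^ k / 2 ^ n < 1 / (c + 1) :=
    h.eventually (gt_mem_nhds (by positivity : (0:ℝ) < 1 / (c+1)))
  obtain ⟨N, hN1, hN2⟩ := (h2.and (Filter.eventually_ge_atTop M)).exists
  refine ⟨N, hN2, ?_⟩
  have hp : (0:ℝ) < 2 ^ N := by positivity
  rw [div_lt_div_iff₀ hp (by positivity)] at hN1
  have h3 : (c:ℝ) * (N:ℝ) ^ k < 2 ^ N := by
    have hnn : (0:ℝ) ≤ (N:ℝ)^k := by positivity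
    nlinarith
  exact_mod_cast h3

lemma binom_aux (a n : ℕ) : a ^ n * (a + (n+1)) ≤ (a+1) ^ (n+1) := by
  induction n with
  | zero => simp
  | succ n ih =>
    calc a^(n+1) * (a + (n+2)) ≤ (a+1) * (a^n * (a + (n+1))) := by
          have : a^(n+1) = a * a^n := by ring
          nlinarith [Nat.zero_le (a^n)]
    _ ≤ (a+1) * (a+1)^(n+1) := Nat.mul_le_mul_left _ ih
    _ = (a+1)^(n+2) := by ring

lemma lte_two {a1 a2 : ℤ} (hpa1 : ¬(2:ℤ) ∣ a1) (hpa2 : ¬(2:ℤ) ∣ a2) {k : ℕ} (hkev : Even k) :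
    emultiplicity 2 (a1 ^ k - a2 ^ k) + 1 =
      emultiplicity 2 (a1 + a2) + emultiplicity 2 (a1 - a2) + emultiplicity (2 : ℤ) k :=
  Int.two_pow_sub_pow (by omega) hpa1 hkev

lemma lte_odd {p : ℕ} (hp : p.Prime) (hp1 : Odd p) {x y : ℤ} (hxy : (p:ℤ) ∣ x - y)
    (hx : ¬(p:ℤ) ∣ x) (n : ℕ) :
    emultiplicity (p:ℤ) (x ^ n - y ^ n) = emultiplicity (p:ℤ) (x - y) + emultiplicity p n :=
  Int.emultiplicity_pow_sub_pow hp hp1 hxy hx n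

lemma order_lemma {a1 a2 : ℤ} {p : ℕ} (hp : p.Prime) (hpa1 : ¬(p:ℤ) ∣ a1) (hpa2 : ¬(p:ℤ) ∣ a2) :
    ∃ d : ℕ, 0 < d ∧ ∀ k : ℕ, ((p:ℤ) ∣ a1^k - a2^k ↔ d ∣ k) := by
  haveI : Fact p.Prime := ⟨hp⟩
  have h1 : (a1 : ZMod p) ≠ 0 := by rwa [Ne, ZMod.intCast_zmod_eq_zero_iff_dvd]
  have h2 : (a2 : ZMod p) ≠ 0 := by rwa [Ne, ZMod.intCast_zmod_eq_zero_iff_dvd]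
  have hαu : IsUnit ((a1 : ZMod p) / (a2 : ZMod p)) :=
    ((isUnit_iff_ne_zero).2 h1).div ((isUnit_iff_ne_zero).2 h2)
  refine ⟨orderOf hαu.unit, orderOf_pos _, fun k => ?_⟩
  have hcast : ((p:ℤ) ∣ a1^k - a2^k) ↔ (a1 : ZMod p)^k = (a2 : ZMod p)^k := by
    rw [← ZMod.intCast_zmod_eq_zero_iff_dvd]
    push_cast
    rw [sub_eq_zero]
  rw [hcast]
  constructor
  · intro h
    refine orderOf_dvd_iff_pow_eq_one.2 (Units.ext ?_)
    push_cast
    rw [IsUnit.unit_spec, div_pow, h, div_self (pow_ne_zero _ h2)]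
  · intro h
    have := congrArg (Units.val) (orderOf_dvd_iff_pow_eq_one.1 h)
    have h3 : ((a1 : ZMod p) / a2)^k = 1 := by
      rw [← IsUnit.unit_spec hαu]; simpa using this
    rw [div_pow, div_eq_one_iff_eq (pow_ne_zero _ h2)] at h3
    exact h3

lemma claimB {a1 a2 : ℤ} {p : ℕ} (hp : p.Prime) (habs : a2.natAbs < a1.natAbs)
    (hpa1 : ¬(p:ℤ) ∣ a1) (hpa2 : ¬(p:ℤ) ∣ a2) :
    ∃ K : ℕ, 0 < K ∧ ∀ m k : ℕ, 0 < k → (p:ℤ)^m ∣ a1^k - a2^k → p^m ≤ K * k := by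
  have hDne : ∀ j : ℕ, 0 < j → a1^j - a2^j ≠ 0 := by
    intro j hj h
    have h1 : a1^j = a2^j := by linarith [sub_eq_zero.mp h]
    have h2 : a1.natAbs ^ j = a2.natAbs ^ j := by
      rw [← Int.natAbs_pow, ← Int.natAbs_pow, h1]
    exact absurd h2 (Nat.pow_lt_pow_left habs hj.ne').ne'
  have hfinD : ∀ j : ℕ, 0 < j → FiniteMultiplicity (p:ℤ) (a1^j - a2^j) := fun j hj =>
    Int.finiteMultiplicity_iff.2 ⟨by simpa using hp.ne_one, hDne j hj⟩
  by_cases hp2 : p = 2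
  · subst hp2
    have hpa1' : ¬(2:ℤ) ∣ a1 := by exact_mod_cast hpa1
    have hpa2' : ¬(2:ℤ) ∣ a2 := by exact_mod_cast hpa2
    have hsub : a1 - a2 ≠ 0 := by
      intro h; have h1 : a1 = a2 := by linarith
      simp [h1] at habs
    have hadd : a1 + a2 ≠ 0 := by
      intro h; have h1 : a1 = -a2 := by linarith
      simp [h1] at habs
    set s1 := multiplicity (2:ℤ) (a1 - a2) with hs1def
    set s2 := multiplicity (2:ℤ) (a1 + a2) with hs2def
    have hfin1 : FiniteMultiplicity (2:ℤ) (a1 - a2) :=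
      Int.finiteMultiplicity_iff.2 ⟨by norm_num, hsub⟩
    have hfin2 : FiniteMultiplicity (2:ℤ) (a1 + a2) :=
      Int.finiteMultiplicity_iff.2 ⟨by norm_num, hadd⟩
    refine ⟨2^(s1+s2), Nat.pow_pos (by norm_num), fun m k hk hdvd => ?_⟩
    have hdvd' : (2:ℤ)^m ∣ a1^k - a2^k := by exact_mod_cast hdvd
    rcases Nat.even_or_odd k with hkev | hkodd
    · -- even case
      have hlte := lte_two hpa1' hpa2' hkev
      have hfink : FiniteMultiplicity 2 k := Nat.finiteMultiplicity_iff.2 ⟨by norm_num, hk⟩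
      have hfinDk : FiniteMultiplicity (2:ℤ) (a1^k - a2^k) := by
        have := hfinD k hk; exact_mod_cast this
      set t := multiplicity (2:ℤ) (a1^k - a2^k) with htdef
      set t3 := multiplicity 2 k with ht3def
      have hm : m ≤ t := hfinDk.le_multiplicity_of_pow_dvd hdvd'
      have hk' : emultiplicity (2:ℤ) (k:ℤ) = (t3 : ℕ∞) := by
        rw [← hfink.emultiplicity_eq_multiplicity, ← Int.natCast_emultiplicity]
        norm_num
      have heq : t + 1 = s2 + s1 + t3 := by
        rw [hfinDk.emultiplicity_eq_multiplicity, hfin1.emultiplicity_eq_multiplicity,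
          hfin2.emultiplicity_eq_multiplicity, hk'] at hlte
        exact_mod_cast hlte
      have hdk : 2^t3 ∣ k := pow_multiplicity_dvd 2 k
      calc 2^m ≤ 2^(s1+s2+t3) := Nat.pow_le_pow_right (by norm_num) (by omega)
      _ = 2^(s1+s2) * 2^t3 := by ring
      _ ≤ 2^(s1+s2) * k := Nat.mul_le_mul_left _ (Nat.le_of_dvd hk hdk)
    · -- odd case
      have hgeo := geom_sum₂_mul a1 a2 k
      set S := ∑ i ∈ Finset.range k, a1^i * a2^(k-1-i) with hSdef
      have hSodd : ¬ (2:ℤ) ∣ S := by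
        intro hdvdS
        have hS0 : ((S : ℤ) : ZMod 2) = 0 := by
          rw [ZMod.intCast_zmod_eq_zero_iff_dvd]
          exact_mod_cast hdvdS
        have hone : ∀ z : ZMod 2, z ≠ 0 → z = 1 := by decide
        have ha1' : (a1 : ZMod 2) = 1 := by
          refine hone _ ?_
          rw [Ne, ZMod.intCast_zmod_eq_zero_iff_dvd]
          exact_mod_cast hpa1'
        have ha2' : (a2 : ZMod 2) = 1 := by
          refine hone _ ?_
          rw [Ne, ZMod.intCast_zmod_eq_zero_iff_dvd]
          exact_mod_cast hpa2'
        rw [hSdef] at hS0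
        push_cast [ha1', ha2'] at hS0
        simp only [one_pow, mul_one, Finset.sum_const, Finset.card_range, nsmul_eq_mul,
          mul_one] at hS0
        rw [ZMod.natCast_eq_zero_iff] at hS0
        exact (Nat.not_even_iff_odd.2 hkodd) (even_iff_two_dvd.2 hS0)
      have hdvd2 : (2:ℤ)^m ∣ (a1 - a2) * S := by
        rw [mul_comm, hgeo]; exact hdvd'
      have hcop : IsCoprime ((2:ℤ)^m) S := by
        have h2 : IsCoprime (2:ℤ) S := by
          have := int_prime_coprime Nat.prime_two (z := S) (by exact_mod_cast hSodd)
          exact_mod_cast this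
        exact h2.pow_left
      have hdvd3 : (2:ℤ)^m ∣ a1 - a2 := hcop.dvd_of_dvd_mul_right hdvd2
      have hm : m ≤ s1 := hfin1.le_multiplicity_of_pow_dvd hdvd3
      calc 2^m ≤ 2^(s1+s2) := Nat.pow_le_pow_right (by norm_num) (by omega)
      _ ≤ 2^(s1+s2) * k := Nat.le_mul_of_pos_right _ hk
  · -- odd prime
    have hodd : Odd p := hp.odd_of_ne_two hp2
    obtain ⟨d, hd0, hd⟩ := order_lemma hp hpa1 hpa2
    have hDd : (p:ℤ) ∣ a1^d - a2^d := (hd d).2 dvd_rfl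
    have hfinDd := hfinD d hd0
    set s := multiplicity (p:ℤ) (a1^d - a2^d) with hsdef
    refine ⟨p^s, Nat.pow_pos hp.pos, fun m k hk hdvd => ?_⟩
    rcases Nat.eq_zero_or_pos m with hm0 | hm0
    · subst hm0
      simpa using Nat.one_le_iff_ne_zero.2 (Nat.mul_pos (Nat.pow_pos hp.pos) hk).ne'
    have hpk : (p:ℤ) ∣ a1^k - a2^k := dvd_trans (dvd_pow_self _ hm0.ne') hdvd
    obtain ⟨j, rfl⟩ := (hd k).1 hpk
    have hj0 : 0 < j := by
      rcases Nat.eq_zero_or_pos j with h|h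
      · subst h; simp at hk
      · exact h
    have hnd : ¬ (p:ℤ) ∣ a1^d := fun h => hpa1 ((Nat.prime_iff_prime_int.mp hp).dvd_of_dvd_pow h)
    have hlte := lte_odd hp hodd hDd hnd j
    rw [← pow_mul, ← pow_mul] at hlte
    have hfinj : FiniteMultiplicity p j := Nat.finiteMultiplicity_iff.2 ⟨hp.ne_one, hj0⟩
    have hfinDk := hfinD (d*j) (by positivity)
    set v := multiplicity p j with hvdef
    have heq : multiplicity (p:ℤ) (a1^(d*j) - a2^(d*j)) = s + v := by
      rw [hfinDk.emultiplicity_eq_multiplicity, hfinDd.emultiplicity_eq_multiplicity,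
        hfinj.emultiplicity_eq_multiplicity] at hlte
      exact_mod_cast hlte
    have hm : m ≤ s + v := heq ▸ hfinDk.le_multiplicity_of_pow_dvd hdvd
    have hdj : p^v ∣ j := pow_multiplicity_dvd p j
    calc p^m ≤ p^(s+v) := Nat.pow_le_pow_right hp.pos hm
    _ = p^s * p^v := by ring
    _ ≤ p^s * j := Nat.mul_le_mul_left _ (Nat.le_of_dvd hj0 hdj)
    _ ≤ p^s * (d*j) := Nat.mul_le_mul_left _ (Nat.le_mul_of_pos_left _ hd0)

lemma claimA {a1 a2 b1 b2 : ℤ} (hcop_b : IsCoprime b1 b2) {p m n k : ℕ} (hp : p.Prime)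
    (hpa1 : ¬ (p:ℤ) ∣ a1) (hpa2 : ¬ (p:ℤ) ∣ a2)
    (h1 : (p:ℤ)^m ∣ b2 * a1 ^ n - b1 * a2 ^ n)
    (h2 : (p:ℤ)^m ∣ b2 * a1 ^ (n+k) - b1 * a2 ^ (n+k)) :
    (p:ℤ)^m ∣ a1 ^ k - a2 ^ k := by
  have e1 : (b1 * (a2^k - a1^k)) * a2^n
      = a1^k * (b2 * a1 ^ n - b1 * a2 ^ n) - (b2 * a1 ^ (n+k) - b1 * a2 ^ (n+k)) := by ring
  have e2 : (b2 * (a2^k - a1^k)) * a1^n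
      = a2^k * (b2 * a1 ^ n - b1 * a2 ^ n) - (b2 * a1 ^ (n+k) - b1 * a2 ^ (n+k)) := by ring
  have d1 : (p:ℤ)^m ∣ (b1 * (a2^k - a1^k)) * a2^n := by
    rw [e1]; exact dvd_sub (h1.mul_left _) h2
  have d2 : (p:ℤ)^m ∣ (b2 * (a2^k - a1^k)) * a1^n := by
    rw [e2]; exact dvd_sub (h1.mul_left _) h2
  have c2 : IsCoprime ((p:ℤ)^m) (a2^n) := ((int_prime_coprime hp hpa2).pow : _)
  have c1 : IsCoprime ((p:ℤ)^m) (a1^n) := ((int_prime_coprime hp hpa1).pow : _)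
  have d1' : (p:ℤ)^m ∣ b1 * (a2^k - a1^k) := c2.dvd_of_dvd_mul_right d1
  have d2' : (p:ℤ)^m ∣ b2 * (a2^k - a1^k) := c1.dvd_of_dvd_mul_right d2
  have := dvd_of_coprime_mul hcop_b d1' d2'
  simpa using this.neg_right

lemma per_prime {a1 a2 b1 b2 : ℤ} (hb1 : b1 ≠ 0) (hb2 : b2 ≠ 0)
    (habs : a2.natAbs < a1.natAbs)
    (hcop_a : IsCoprime a1 a2) (hcop_b : IsCoprime b1 b2) {p : ℕ} (hp : p.Prime) :
    ∃ K C : ℕ, 0 < K ∧ ∀ m n k : ℕ, C ≤ n → 0 < k →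
      (p:ℤ)^m ∣ b2 * a1 ^ n - b1 * a2 ^ n →
      (p:ℤ)^m ∣ b2 * a1 ^ (n+k) - b1 * a2 ^ (n+k) →
      p^m ≤ K * k := by
  have hpnu : ¬ IsUnit (p:ℤ) := by
    rw [Int.isUnit_iff]
    have := hp.two_le; omega
  by_cases hpa1 : (p:ℤ) ∣ a1
  · have hpa2 : ¬ (p:ℤ) ∣ a2 := fun h => hpnu (hcop_a.isUnit_of_dvd' hpa1 h)
    have hfin : FiniteMultiplicity (p:ℤ) b1 :=
      Int.finiteMultiplicity_iff.2 ⟨by simpa using hp.ne_one, hb1⟩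
    set t := multiplicity (p:ℤ) b1 with htdef
    refine ⟨p^t, t+1, Nat.pow_pos hp.pos, fun m n k hn hk h1 _ => ?_⟩
    have hm : m ≤ t := by
      by_contra hmt
      push_neg at hmt
      have hd1 : (p:ℤ)^(t+1) ∣ b2 * a1^n - b1 * a2^n :=
        dvd_trans (pow_dvd_pow _ hmt) h1
      have hd2 : (p:ℤ)^(t+1) ∣ b2 * a1^n := by
        refine Dvd.dvd.mul_left ?_ b2
        exact dvd_trans (pow_dvd_pow _ hn) (pow_dvd_pow_of_dvd hpa1 n)
      have hd3 : (p:ℤ)^(t+1) ∣ b1 * a2^n := by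
        have : (p:ℤ)^(t+1) ∣ b2 * a1^n - (b2 * a1^n - b1 * a2^n) := dvd_sub hd2 hd1
        simpa using this
      have hd4 : (p:ℤ)^(t+1) ∣ b1 :=
        (((int_prime_coprime hp hpa2).pow : IsCoprime ((p:ℤ)^(t+1)) (a2^n))).dvd_of_dvd_mul_right hd3
      exact absurd (hfin.le_multiplicity_of_pow_dvd hd4) (by omega)
    calc p^m ≤ p^t := Nat.pow_le_pow_right hp.pos hm
    _ ≤ p^t * k := Nat.le_mul_of_pos_right _ hk
  · by_cases hpa2 : (p:ℤ) ∣ a2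
    · have hfin : FiniteMultiplicity (p:ℤ) b2 :=
        Int.finiteMultiplicity_iff.2 ⟨by simpa using hp.ne_one, hb2⟩
      set t := multiplicity (p:ℤ) b2 with htdef
      refine ⟨p^t, t+1, Nat.pow_pos hp.pos, fun m n k hn hk h1 _ => ?_⟩
      have hm : m ≤ t := by
        by_contra hmt
        push_neg at hmt
        have hd1 : (p:ℤ)^(t+1) ∣ b2 * a1^n - b1 * a2^n :=
          dvd_trans (pow_dvd_pow _ hmt) h1
        have hd2 : (p:ℤ)^(t+1) ∣ b1 * a2^n := by
          refine Dvd.dvd.mul_left ?_ b1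
          exact dvd_trans (pow_dvd_pow _ hn) (pow_dvd_pow_of_dvd hpa2 n)
        have hd3 : (p:ℤ)^(t+1) ∣ b2 * a1^n := by
          have : (p:ℤ)^(t+1) ∣ (b2 * a1^n - b1 * a2^n) + b1 * a2^n := dvd_add hd1 hd2
          simpa using this
        have hd4 : (p:ℤ)^(t+1) ∣ b2 :=
          (((int_prime_coprime hp hpa1).pow : IsCoprime ((p:ℤ)^(t+1)) (a1^n))).dvd_of_dvd_mul_right hd3
        exact absurd (hfin.le_multiplicity_of_pow_dvd hd4) (by omega)
      calc p^m ≤ p^t := Nat.pow_le_pow_right hp.pos hm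
      _ ≤ p^t * k := Nat.le_mul_of_pos_right _ hk
    · obtain ⟨K, hK0, hK⟩ := claimB hp habs hpa1 hpa2
      exact ⟨K, 0, hK0, fun m n k _ hk h1 h2 =>
        hK m k hk (claimA hcop_b hp hpa1 hpa2 h1 h2)⟩

lemma main_lemma (a1 a2 b1 b2 : ℤ) (ha2 : a2 ≠ 0) (hb1 : b1 ≠ 0) (hb2 : b2 ≠ 0)
    (habs : a2.natAbs < a1.natAbs)
    (hcop_a : IsCoprime a1 a2) (hcop_b : IsCoprime b1 b2) :
    {p : ℕ | p.Prime ∧ ∃ n : ℕ, (p : ℤ) ∣ b2 * a1 ^ n - b1 * a2 ^ n}.Infinite := by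
  set x : ℕ → ℤ := fun n => b2 * a1 ^ n - b1 * a2 ^ n with hxdef
  by_contra hfin
  rw [Set.not_infinite] at hfin
  set S : Finset ℕ := hfin.toFinset with hSdef
  have hSmem : ∀ q : ℕ, q ∈ S ↔ (q.Prime ∧ ∃ n : ℕ, (q:ℤ) ∣ x n) := by
    intro q; rw [hSdef, Set.Finite.mem_toFinset]; rfl
  -- choice of constants
  have hch : ∀ p : ℕ, ∃ K C : ℕ, 0 < K ∧ (p.Prime → ∀ m n k : ℕ, C ≤ n → 0 < k →
      (p:ℤ)^m ∣ x n → (p:ℤ)^m ∣ x (n+k) → p^m ≤ K * k) := by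
    intro p
    by_cases hp : p.Prime
    · obtain ⟨K, C, hK0, hKC⟩ := per_prime hb1 hb2 habs hcop_a hcop_b hp
      exact ⟨K, C, hK0, fun _ => hKC⟩
    · exact ⟨1, 0, one_pos, fun hp' => absurd hp' hp⟩
  choose K C hK0 hKC using hch
  set A := a1.natAbs with hAdef
  set a := a2.natAbs with hadef
  set B1 := b1.natAbs with hB1def
  set B2 := b2.natAbs with hB2def
  have ha0 : 0 < a := Int.natAbs_pos.2 ha2
  have hA2 : 2 ≤ A := by omega
  set k0 := S.card with hk0def
  set Ktot := ∏ p ∈ S, K p with hKtotdef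
  have hKtot0 : 0 < Ktot := Finset.prod_pos (fun p _ => hK0 p)
  set M := max (max (S.sup C) (2*B1*A+1)) (k0+1) with hMdef
  obtain ⟨N, hNM, hNbig⟩ := exists_big (2 * Ktot) k0 M
  have hN0 : 0 < N := by omega
  -- exponents
  set mm : ℕ → ℕ := fun p => Nat.log p (K p * N) + 1 with hmmdef
  -- each prime can have at most one n in the window with p^(mm p) ∣ x n
  have huniq : ∀ p ∈ S, ∀ n ∈ Finset.Ico N (2*N), ∀ n' ∈ Finset.Ico N (2*N),
      (p:ℤ)^(mm p) ∣ x n → (p:ℤ)^(mm p) ∣ x n' → n = n' := by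
    intro p hpS n hn n' hn' hd hd'
    rw [Finset.mem_Ico] at hn hn'
    have hp : p.Prime := ((hSmem p).1 hpS).1
    have hlog : K p * N < p ^ (mm p) := Nat.lt_pow_succ_log_self hp.one_lt _
    by_contra hne
    rcases Nat.lt_or_ge n n' with h | h
    · have := hKC p hp (mm p) n (n' - n) (le_trans (Finset.le_sup hpS) (by omega)) (by omega)
        hd (by rw [Nat.add_sub_cancel' h.le]; exact hd')
      have hle : K p * (n' - n) ≤ K p * N := Nat.mul_le_mul_left _ (by omega)
      omega
    · have hlt : n' < n := by omega
      have := hKC p hp (mm p) n' (n - n') (le_trans (Finset.le_sup hpS) (by omega)) (by omega)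
        hd' (by rw [Nat.add_sub_cancel' hlt.le]; exact hd)
      have hle : K p * (n - n') ≤ K p * N := Nat.mul_le_mul_left _ (by omega)
      omega
  -- find a good n in the window
  set bads := (Finset.Ico N (2*N)).filter (fun n => ∃ p ∈ S, (p:ℤ)^(mm p) ∣ x n) with hbadsdef
  have hbadcard : bads.card ≤ k0 := by
    have hsub : bads ⊆ S.biUnion (fun p => (Finset.Ico N (2*N)).filter
        (fun n => (p:ℤ)^(mm p) ∣ x n)) := by
      intro n hn
      rw [hbadsdef, Finset.mem_filter] at hn
      obtain ⟨hn1, p, hpS, hpd⟩ := hn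
      exact Finset.mem_biUnion.2 ⟨p, hpS, Finset.mem_filter.2 ⟨hn1, hpd⟩⟩
    refine le_trans (Finset.card_le_card hsub) (le_trans (Finset.card_biUnion_le) ?_)
    rw [hk0def]
    calc ∑ p ∈ S, ((Finset.Ico N (2*N)).filter (fun n => (p:ℤ)^(mm p) ∣ x n)).card
        ≤ ∑ p ∈ S, 1 := by
          refine Finset.sum_le_sum (fun p hpS => ?_)
          refine Finset.card_le_one.2 (fun n hn n' hn' => ?_)
          rw [Finset.mem_filter] at hn hn'
          exact huniq p hpS n hn.1 n' hn'.1 hn.2 hn'.2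
    _ = S.card := by simp
  obtain ⟨n, hnIco, hngood⟩ : ∃ n ∈ Finset.Ico N (2*N), ¬ ∃ p ∈ S, (p:ℤ)^(mm p) ∣ x n := by
    by_contra hall
    push_neg at hall
    have : Finset.Ico N (2*N) ⊆ bads := by
      intro n hn
      exact Finset.mem_filter.2 ⟨hn, hall n hn⟩
    have := Finset.card_le_card this
    rw [Nat.card_Ico] at this
    omega
  push_neg at hngood
  rw [Finset.mem_Ico] at hnIco
  -- lower bound on |x n|
  set X := (x n).natAbs with hXdef
  have hlow1 : B2 * A^n ≤ X + B1 * a^n := by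
    have he : b2 * a1^n = x n + b1 * a2^n := by rw [hxdef]; ring
    calc B2 * A^n = (b2 * a1^n).natAbs := by
          rw [Int.natAbs_mul, Int.natAbs_pow]
    _ = (x n + b1 * a2^n).natAbs := by rw [← he]
    _ ≤ X + (b1 * a2^n).natAbs := Int.natAbs_add_le _ _
    _ = X + B1 * a^n := by rw [Int.natAbs_mul, Int.natAbs_pow]
  have hlow2 : 2 * (B1 * a^n) ≤ A^n := by
    have hn1 : 1 ≤ n := by omega
    have hb := binom_aux a (n-1)
    rw [Nat.sub_add_cancel hn1] at hb
    have h2 : (a+1)^n ≤ A^n := Nat.pow_le_pow_left (by omega) n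
    have h3 : (2*B1*a) * a^(n-1) ≤ n * a^(n-1) := by
      refine Nat.mul_le_mul_right _ ?_
      have hA : 2*B1*A ≤ n := by omega
      nlinarith
    have h4 : a * a^(n-1) = a^n := by
      rw [← pow_succ']
      congr 1
      omega
    calc 2 * (B1 * a^n) = (2*B1*a) * a^(n-1) := by rw [← h4]; ring
    _ ≤ n * a^(n-1) := h3
    _ ≤ (a+n) * a^(n-1) := Nat.mul_le_mul_right _ (by omega)
    _ = a^(n-1) * (a+n) := mul_comm _ _
    _ ≤ (a+1)^n := hb
    _ ≤ A^n := h2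
  have hlowfin : 2^N ≤ 2 * X := by
    have hB2 : 1 ≤ B2 := Int.natAbs_pos.2 hb2
    have hAn : A^n ≤ B2 * A^n := Nat.le_mul_of_pos_left _ hB2
    have h2N : 2^N ≤ A^n :=
      le_trans (Nat.pow_le_pow_left hA2 N) (Nat.pow_le_pow_right (by omega) (by omega))
    omega
  -- upper bound on X
  have hX0 : X ≠ 0 := by
    intro h
    rw [h] at hlowfin
    have := Nat.one_le_two_pow (n := N)
    omega
  have hXfact := Nat.factorization_prod_pow_eq_self hX0
  have hsupS : X.factorization.support ⊆ S := by
    intro q hq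
    have hqp : q.Prime := Nat.prime_of_mem_primeFactors hq
    have hqd : q ∣ X := Nat.dvd_of_mem_primeFactors hq
    refine (hSmem q).2 ⟨hqp, n, ?_⟩
    rwa [← Int.natAbs_dvd_natAbs, Int.natAbs_natCast]
  have hXle : X ≤ Ktot * N^k0 := by
    have hXeq : X = ∏ q ∈ X.factorization.support, q ^ X.factorization q := by
      conv_lhs => rw [← hXfact]
      rfl
    have hXeq2 : X = ∏ q ∈ S, q ^ X.factorization q := by
      conv_lhs => rw [hXeq]
      refine Finset.prod_subset hsupS (fun q hqS hqn => ?_)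
      rw [Finsupp.notMem_support_iff.1 hqn, pow_zero]
    have hXle2 : X ≤ ∏ q ∈ S, (K q * N) := by
      rw [hXeq2]
      refine Finset.prod_le_prod (fun _ _ => Nat.zero_le _) (fun q hqS => ?_)
      have hq : q.Prime := ((hSmem q).1 hqS).1
      have hnotd : ¬ (q:ℤ)^(mm q) ∣ x n := hngood q hqS
      have hnotd' : ¬ q^(mm q) ∣ X := by
        intro h
        apply hnotd
        have : ((q^(mm q) : ℕ) : ℤ) ∣ (x n) := by
          rw [← Int.natAbs_dvd_natAbs, Int.natAbs_natCast]
          exact h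
        simpa using this
      have hfle : X.factorization q ≤ Nat.log q (K q * N) := by
        by_contra hgt
        push_neg at hgt
        exact hnotd' ((Nat.Prime.pow_dvd_iff_le_factorization hq hX0).2 hgt)
      calc q ^ X.factorization q ≤ q ^ Nat.log q (K q * N) :=
            Nat.pow_le_pow_right hq.pos hfle
      _ ≤ K q * N := Nat.pow_log_le_self q (Nat.mul_pos (hK0 q) hN0).ne'
    calc X ≤ ∏ q ∈ S, (K q * N) := hXle2
    _ = Ktot * N^k0 := by rw [Finset.prod_mul_distrib, Finset.prod_const, hKtotdef, hk0def]
  -- contradiction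
  have : 2^N ≤ 2 * (Ktot * N^k0) := le_trans hlowfin (by omega)
  rw [← mul_assoc] at this
  omega

/-- For coprime nonzero integers `a1 ≠ ±a2`, `b1, b2` with `a1/a2` and `b1/b2`
multiplicatively independent in `ℚ*`, infinitely many primes divide some term of
the sequence `x n = b2 * a1^n - b1 * a2^n`. -/
theorem primes_dividing_recurrence_infinite
    (a1 a2 b1 b2 : ℤ) (ha1 : a1 ≠ 0) (ha2 : a2 ≠ 0) (hb1 : b1 ≠ 0) (hb2 : b2 ≠ 0)
    (hne : a1 ≠ a2) (hne' : a1 ≠ -a2)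
    (hcop_a : IsCoprime a1 a2) (hcop_b : IsCoprime b1 b2)
    (hindep : ∀ x y : ℤ,
      ((a1 : ℚ) / a2) ^ x * ((b1 : ℚ) / b2) ^ y = 1 → x = 0 ∧ y = 0) :
    {p : ℕ | p.Prime ∧ ∃ n : ℕ, (p : ℤ) ∣ b2 * a1 ^ n - b1 * a2 ^ n}.Infinite := by
  have hABne : a1.natAbs ≠ a2.natAbs := by
    intro h
    rcases Int.natAbs_eq_natAbs_iff.1 h with h1 | h1
    · exact hne h1
    · exact hne' h1
  rcases Nat.lt_or_ge a2.natAbs a1.natAbs with habs | habs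
  · exact main_lemma a1 a2 b1 b2 ha2 hb1 hb2 habs hcop_a hcop_b
  · have habs' : a1.natAbs < a2.natAbs := by omega
    have h := main_lemma a2 a1 b2 b1 ha1 hb2 hb1 habs' hcop_a.symm hcop_b.symm
    have hset : {p : ℕ | p.Prime ∧ ∃ n : ℕ, (p : ℤ) ∣ b1 * a2 ^ n - b2 * a1 ^ n}
        = {p : ℕ | p.Prime ∧ ∃ n : ℕ, (p : ℤ) ∣ b2 * a1 ^ n - b1 * a2 ^ n} := by
      ext p
      simp only [Set.mem_setOf_eq, and_congr_right_iff]
      intro _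
      constructor
      · rintro ⟨n, hn⟩
        exact ⟨n, by simpa using hn.neg_right⟩
      · rintro ⟨n, hn⟩
        exact ⟨n, by simpa using hn.neg_right⟩
    rw [← hset]
    exact h
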